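/- arXiv:1004.3791 — 2 statements merged into one kernel-verified Lean document; each statement's English description precedes it below -/
import Mathlib

section
/- Let C ⊆ F_2^{2n} be weakly self-dual with all codewords of even weight, and suppose dim(C^⊥/C) = 2k with k ≥ 1 and C^⊥ \ C contains an odd-weight vector. Then there is a symplectic basis X̄_1, Z̄_1, ..., X̄_k, Z̄_k of C^⊥/C (with ⟨X̄_i, Z̄_j⟩ = δ_{ij} and ⟨X̄_i, X̄_j⟩ = ⟨Z̄_i, Z̄_j⟩ = 0 mod C) such that at most one of the 2k basis vectors has odd Hamming weight. -/
/-- Hamming weight of a binary vector. -/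
def wt {ι : Type*} [Fintype ι] (x : ι → ZMod 2) : ℕ :=
  (Finset.univ.filter fun i => x i ≠ 0).card

/-- Support of a binary vector. -/
def supp {ι : Type*} [Fintype ι] (x : ι → ZMod 2) : Finset ι :=
  Finset.univ.filter fun i => x i ≠ 0

/-- The `F₂` inner product. -/
def dot {ι : Type*} [Fintype ι] (x y : ι → ZMod 2) : ZMod 2 := ∑ i, x i * y i

/-- The dual code `C^⊥` of a linear code `C ⊆ F₂^ι`. -/
def dualCode {ι : Type*} [Fintype ι] (C : Submodule (ZMod 2) (ι → ZMod 2)) :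
    Submodule (ZMod 2) (ι → ZMod 2) where
  carrier := {y | ∀ x ∈ C, dot x y = 0}
  add_mem' := by
    intro a b ha hb x hx
    have h : dot x (a + b) = dot x a + dot x b := by
      simp [dot, mul_add, Finset.sum_add_distrib]
    simp only [Set.mem_setOf_eq] at *
    rw [h, ha x hx, hb x hx, add_zero]
  zero_mem' := by intro x _; simp [dot]
  smul_mem' := by
    intro c a ha x hx
    have h : dot x (c • a) = c * dot x a := by
      simp only [dot, Pi.smul_apply, smul_eq_mul, Finset.mul_sum]
      exact Finset.sum_congr rfl fun i _ => by ring
    simp only [Set.mem_setOf_eq] at *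
    rw [h, ha x hx, mul_zero]

section Helpers
variable {ι : Type*} [Fintype ι]

lemma dot_comm (x y : ι → ZMod 2) : dot x y = dot y x :=
  Finset.sum_congr rfl fun i _ => mul_comm _ _

lemma dot_add_right (x y z : ι → ZMod 2) : dot x (y + z) = dot x y + dot x z := by
  simp [dot, mul_add, Finset.sum_add_distrib]

lemma dot_smul_right (c : ZMod 2) (x y : ι → ZMod 2) : dot x (c • y) = c * dot x y := by
  simp only [dot, Pi.smul_apply, smul_eq_mul, Finset.mul_sum]
  exact Finset.sum_congr rfl fun i _ => by ring

lemma dot_add_left (x y z : ι → ZMod 2) : dot (x + y) z = dot x z + dot y z := by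
  rw [dot_comm, dot_add_right, dot_comm z x, dot_comm z y]

lemma dot_smul_left (c : ZMod 2) (x y : ι → ZMod 2) : dot (c • x) y = c * dot x y := by
  rw [dot_comm, dot_smul_right, dot_comm]

def Bf : LinearMap.BilinForm (ZMod 2) (ι → ZMod 2) :=
  LinearMap.mk₂ (ZMod 2) dot dot_add_left (fun c x y => dot_smul_left c x y)
    dot_add_right (fun c x y => dot_smul_right c x y)

@[simp] lemma Bf_apply (x y : ι → ZMod 2) : Bf x y = dot x y := rfl

lemma Bf_refl : (Bf (ι := ι)).IsRefl := fun x y h => by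
  simpa [dot_comm y x] using h

lemma Bf_nondeg [DecidableEq ι] : (Bf (ι := ι)).Nondegenerate := by
  refine (LinearMap.IsRefl.nondegenerate_iff_separatingLeft Bf_refl).2 ?_
  intro m h
  funext i
  have := h (Pi.single i 1)
  simp only [Bf_apply, dot] at this
  rwa [Finset.sum_eq_single i (fun j _ hj => by simp [Pi.single_eq_of_ne hj])
    (by simp), Pi.single_eq_same, mul_one] at this

lemma zmod2_ne_zero {a : ZMod 2} (h : a ≠ 0) : a = 1 := by revert h; revert a; decide
lemma zmod2_sq (a : ZMod 2) : a * a = a := by revert a; decide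
lemma zmod2_add_self (a : ZMod 2) : a + a = 0 := by revert a; decide

lemma wt_cast (x : ι → ZMod 2) : (wt x : ZMod 2) = dot x x := by
  classical
  have h1 : dot x x = ∑ i, x i := Finset.sum_congr rfl fun i _ => zmod2_sq _
  rw [h1, ← Finset.sum_filter_ne_zero]
  rw [Finset.sum_congr rfl (fun i hi => zmod2_ne_zero (Finset.mem_filter.1 hi).2)]
  simp [wt]

lemma even_cast_zmod2 {m : ℕ} (h : Even m) : (m : ZMod 2) = 0 := by
  obtain ⟨c, rfl⟩ := h; push_cast; ring_nf
  rw [show ((2:ZMod 2)) = 0 by decide]; ring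

lemma odd_wt_iff (x : ι → ZMod 2) : Odd (wt x) ↔ dot x x = 1 := by
  rw [← wt_cast]
  constructor
  · rintro ⟨c, hc⟩; rw [hc]; push_cast; rw [show ((2:ZMod 2)) = 0 by decide]; ring
  · intro h
    rcases Nat.even_or_odd (wt x) with he | ho
    · rw [even_cast_zmod2 he] at h; exact absurd h (by decide)
    · exact ho

lemma mem_dualCode {C : Submodule (ZMod 2) (ι → ZMod 2)} {y : ι → ZMod 2} :
    y ∈ dualCode C ↔ ∀ x ∈ C, dot x y = 0 := Iff.rfl

end Helpers

open Module Submodule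

/-- Symplectic basis induction for the alternating part. -/
lemma symp_ind {N : ℕ} (C : Submodule (ZMod 2) (Fin N → ZMod 2)) (k : ℕ) :
    ∀ U : Submodule (ZMod 2) (Fin N → ZMod 2), C ≤ U → U ≤ dualCode C →
    (∀ u ∈ U, dot u u = 0) →
    (∀ u ∈ U, (∀ w ∈ U, dot u w = 0) → u ∈ C) →
    finrank (ZMod 2) U = finrank (ZMod 2) C + 2 * k →
    ∃ X Z : Fin k → (Fin N → ZMod 2), (∀ i, X i ∈ U) ∧ (∀ i, Z i ∈ U) ∧
      (∀ i j, dot (X i) (Z j) = if i = j then 1 else 0) ∧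
      (∀ i j, dot (X i) (X j) = 0) ∧ (∀ i j, dot (Z i) (Z j) = 0) ∧
      C ⊔ span (ZMod 2) (Set.range X ∪ Set.range Z) = U := by
  induction k with
  | zero =>
    intro U hCU _ _ _ hrank
    refine ⟨fun i => i.elim0, fun i => i.elim0, fun i => i.elim0, fun i => i.elim0,
      fun i => i.elim0, fun i => i.elim0, fun i => i.elim0, ?_⟩
    have hUC : C = U := Submodule.eq_of_le_of_finrank_le hCU (by omega)
    simp [Set.range_eq_empty, hUC]
  | succ k IH =>
    intro U hCU hUd hAlt hNd hrank
    -- pick x ∈ U \ C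
    have hne : ¬ U ≤ C := by
      intro h
      have h1 : finrank (ZMod 2) U ≤ finrank (ZMod 2) C := Submodule.finrank_mono h
      omega
    obtain ⟨x, hxU, hxC⟩ := SetLike.not_le_iff_exists.1 hne
    -- pick y with dot x y = 1
    have hy : ∃ y ∈ U, dot x y = 1 := by
      by_contra h
      push_neg at h
      exact hxC (hNd x hxU fun w hw => by
        by_contra hne'; exact h w hw (zmod2_ne_zero hne'))
    obtain ⟨y, hyU, hxy⟩ := hy
    have hyx : dot y x = 1 := by rw [dot_comm]; exact hxy
    have hxx : dot x x = 0 := hAlt x hxU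
    have hyy : dot y y = 0 := hAlt y hyU
    -- the reduced subspace
    set U' : Submodule (ZMod 2) (Fin N → ZMod 2) :=
      U ⊓ LinearMap.ker (Bf x) ⊓ LinearMap.ker (Bf y) with hU'def
    have memU' : ∀ w, w ∈ U' ↔ w ∈ U ∧ dot x w = 0 ∧ dot y w = 0 := by
      intro w
      simp [hU'def, Submodule.mem_inf, LinearMap.mem_ker, and_assoc]
    -- decomposition of elements of U
    have hdec : ∀ u ∈ U, u + (dot y u) • x + (dot x u) • y ∈ U' := by
      intro u hu
      rw [memU']
      refine ⟨add_mem (add_mem hu (smul_mem _ _ hxU)) (smul_mem _ _ hyU), ?_, ?_⟩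
      · rw [dot_add_right, dot_add_right, dot_smul_right, dot_smul_right, hxx, hxy,
          mul_zero, mul_one, add_zero]
        exact zmod2_add_self _
      · rw [dot_add_right, dot_add_right, dot_smul_right, dot_smul_right, hyx, hyy,
          mul_one, mul_zero, add_zero]
        exact zmod2_add_self _
    have hre : ∀ u ∈ U, u = (u + (dot y u) • x + (dot x u) • y) +
        ((dot y u) • x + (dot x u) • y) := by
      intro u _
      funext i
      simp only [Pi.add_apply, Pi.smul_apply, smul_eq_mul]
      exact (by decide : ∀ a b c : ZMod 2, a = a + b + c + (b + c)) _ _ _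
    have hsup : span (ZMod 2) {x, y} ⊔ U' = U := by
      apply le_antisymm
      · refine sup_le (span_le.2 ?_) (le_trans inf_le_left inf_le_left)
        rintro z (rfl | rfl)
        exacts [hxU, hyU]
      · intro u hu
        rw [Submodule.mem_sup]
        refine ⟨(dot y u) • x + (dot x u) • y,
          Submodule.mem_span_pair.2 ⟨_, _, rfl⟩,
          u + (dot y u) • x + (dot x u) • y, hdec u hu, ?_⟩
        have h2 : ∀ a b : Fin N → ZMod 2, b + (a + b) = a := by
          intro a b
          have hb : b + b = 0 := by funext i; exact zmod2_add_self _
          calc b + (a + b) = a + (b + b) := by ring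
          _ = a := by rw [hb, add_zero]
        calc (dot y u) • x + (dot x u) • y + (u + (dot y u) • x + (dot x u) • y)
            = ((dot y u) • x + (dot x u) • y) + (u + ((dot y u) • x + (dot x u) • y)) := by ring
          _ = u := h2 u _
    have hinf : span (ZMod 2) {x, y} ⊓ U' = ⊥ := by
      rw [eq_bot_iff]
      intro w hw
      rw [Submodule.mem_inf] at hw
      obtain ⟨hw1, hw2⟩ := hw
      obtain ⟨a, b, rfl⟩ := Submodule.mem_span_pair.1 hw1
      rw [memU'] at hw2
      obtain ⟨-, h1, h2⟩ := hw2
      rw [dot_add_right, dot_smul_right, dot_smul_right, hxx, hxy, mul_zero, mul_one,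
        zero_add] at h1
      rw [dot_add_right, dot_smul_right, dot_smul_right, hyx, hyy, mul_one, mul_zero,
        add_zero] at h2
      rw [h1, h2]
      simp [Submodule.mem_bot]
    have hli : LinearIndependent (ZMod 2) ![x, y] := by
      rw [LinearIndependent.pair_iff]
      intro s t hst
      have h1 : dot x (s • x + t • y) = 0 := by rw [hst]; simp [dot]
      have h2 : dot y (s • x + t • y) = 0 := by rw [hst]; simp [dot]
      rw [dot_add_right, dot_smul_right, dot_smul_right, hxx, hxy, mul_zero, mul_one,
        zero_add] at h1
      rw [dot_add_right, dot_smul_right, dot_smul_right, hyx, hyy, mul_one, mul_zero,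
        add_zero] at h2
      exact ⟨h2, h1⟩
    have hrange : Set.range ![x, y] = {x, y} := by
      ext z
      simp [Matrix.range_cons, Matrix.range_empty]
      tauto
    have hfr2 : finrank (ZMod 2) (span (ZMod 2) ({x, y} : Set (Fin N → ZMod 2))) = 2 := by
      rw [← hrange, finrank_span_eq_card hli]
      simp
    have hrank' : finrank (ZMod 2) U' = finrank (ZMod 2) C + 2 * k := by
      have := Submodule.finrank_sup_add_finrank_inf_eq
        (span (ZMod 2) ({x, y} : Set (Fin N → ZMod 2))) U'
      rw [hsup, hinf, hfr2, finrank_bot] at this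
      omega
    -- hypotheses for U'
    have hCU' : C ≤ U' := by
      intro c hc
      rw [memU']
      refine ⟨hCU hc, ?_, ?_⟩
      · rw [dot_comm]; exact hUd hxU c hc
      · rw [dot_comm]; exact hUd hyU c hc
    have hU'U : U' ≤ U := le_trans inf_le_left inf_le_left
    have hNd' : ∀ u ∈ U', (∀ w ∈ U', dot u w = 0) → u ∈ C := by
      intro u hu h
      rw [memU'] at hu
      obtain ⟨huU, hux, huy⟩ := hu
      refine hNd u huU fun w hw => ?_
      have hdw := h _ (hdec w hw)
      have hux' : dot u x = 0 := by rw [dot_comm]; exact hux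
      have huy' : dot u y = 0 := by rw [dot_comm]; exact huy
      have key : dot u (w + dot y w • x + dot x w • y) = dot u w := by
        rw [dot_add_right, dot_add_right, dot_smul_right, dot_smul_right, hux', huy']
        ring
      rw [← key]
      exact hdw
    obtain ⟨X', Z', hX'U, hZ'U, hGram, hXX, hZZ, hspan⟩ :=
      IH U' hCU' (le_trans hU'U hUd) (fun u hu => hAlt u (hU'U hu)) hNd' hrank'
    -- assemble
    refine ⟨Fin.cons x X', Fin.cons y Z', ?_, ?_, ?_, ?_, ?_, ?_⟩
    · intro i
      refine Fin.cases hxU (fun j => hU'U (hX'U j)) i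
    · intro i
      refine Fin.cases hyU (fun j => hU'U (hZ'U j)) i
    · intro i j
      have hxZ : ∀ j, dot x (Z' j) = 0 := fun j => ((memU' _).1 (hZ'U j)).2.1
      have hyX : ∀ j, dot y (X' j) = 0 := fun j => ((memU' _).1 (hX'U j)).2.2
      refine Fin.cases ?_ (fun i' => ?_) i
      · refine Fin.cases ?_ (fun j' => ?_) j
        · simp [hxy]
        · simp [Fin.cons_succ, hxZ, (Fin.succ_ne_zero j').symm]
      · refine Fin.cases ?_ (fun j' => ?_) j
        · rw [Fin.cons_succ, Fin.cons_zero, dot_comm, hyX,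
            if_neg (Fin.succ_ne_zero i')]
        · rw [Fin.cons_succ, Fin.cons_succ, hGram]
          simp [Fin.succ_inj]
    · intro i j
      have hxX : ∀ j, dot x (X' j) = 0 := fun j => ((memU' _).1 (hX'U j)).2.1
      refine Fin.cases ?_ (fun i' => ?_) i
      · refine Fin.cases (by simpa using hxx) (fun j' => by simpa using hxX j') j
      · refine Fin.cases ?_ (fun j' => ?_) j
        · rw [Fin.cons_succ, Fin.cons_zero, dot_comm]; exact hxX i'
        · rw [Fin.cons_succ, Fin.cons_succ]; exact hXX i' j'
    · intro i j
      have hyZ : ∀ j, dot y (Z' j) = 0 := fun j => ((memU' _).1 (hZ'U j)).2.2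
      refine Fin.cases ?_ (fun i' => ?_) i
      · refine Fin.cases (by simpa using hyy) (fun j' => by simpa using hyZ j') j
      · refine Fin.cases ?_ (fun j' => ?_) j
        · rw [Fin.cons_succ, Fin.cons_zero, dot_comm]; exact hyZ i'
        · rw [Fin.cons_succ, Fin.cons_succ]; exact hZZ i' j'
    · rw [Fin.range_cons, Fin.range_cons]
      have hset : (insert x (Set.range X') ∪ insert y (Set.range Z') : Set (Fin N → ZMod 2))
          = {x, y} ∪ (Set.range X' ∪ Set.range Z') := by
        ext z
        simp only [Set.mem_union, Set.mem_insert_iff, Set.mem_singleton_iff]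
        tauto
      rw [hset, Submodule.span_union, sup_left_comm, hspan, hsup]

lemma dot_ones {ι : Type*} [Fintype ι] (x : ι → ZMod 2) :
    dot x (fun _ => (1 : ZMod 2)) = dot x x := by
  unfold dot
  exact Finset.sum_congr rfl fun i _ => by rw [mul_one, zmod2_sq]

/-- suppose `C ⊆ F₂^{2n}` is weakly self-dual with all codewords of even
weight, `dim(C^⊥/C) = 2k` with `k ≥ 1`, and `C^⊥ \ C` contains an odd-weight vector.
Then there is a symplectic basis `X̄_1, Z̄_1, …, X̄_k, Z̄_k` of `C^⊥/C`
(`⟨X̄_i, Z̄_j⟩ = δ_{ij}`, and distinct same-type basis vectors pair to `0`)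
such that at most one of the `2k` basis vectors has odd Hamming weight. -/
theorem stmt_8 {n k : ℕ} (hk : 1 ≤ k)
    (C : Submodule (ZMod 2) (Fin (2 * n) → ZMod 2))
    (hsd : C ≤ dualCode C)
    (hEven : ∀ x ∈ C, Even (wt x))
    (hdim : Module.finrank (ZMod 2) (dualCode C) = Module.finrank (ZMod 2) C + 2 * k)
    (hodd : ∃ v : Fin (2 * n) → ZMod 2, v ∈ dualCode C ∧ v ∉ C ∧ Odd (wt v)) :
    ∃ X Z : Fin k → (Fin (2 * n) → ZMod 2),
      (∀ i, X i ∈ dualCode C) ∧ (∀ i, Z i ∈ dualCode C) ∧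
      (∀ i, X i ∉ C) ∧ (∀ i, Z i ∉ C) ∧
      (∀ i j, dot (X i) (Z j) = if i = j then 1 else 0) ∧
      (∀ i j, i ≠ j → dot (X i) (X j) = 0) ∧
      (∀ i j, i ≠ j → dot (Z i) (Z j) = 0) ∧
      C ⊔ Submodule.span (ZMod 2) (Set.range X ∪ Set.range Z) = dualCode C ∧
      (Finset.univ.filter fun i => Odd (wt (X i))).card +
        (Finset.univ.filter fun i => Odd (wt (Z i))).card ≤ 1 := by
  classical
  obtain ⟨k', rfl⟩ : ∃ k', k = k' + 1 := ⟨k - 1, by omega⟩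
  obtain ⟨v, hvdual, hvC, hvodd⟩ := hodd
  set e : Fin (2 * n) → ZMod 2 := fun _ => 1 with he
  have dvv : dot v v = 1 := (odd_wt_iff v).1 hvodd
  have dve : dot v e = 1 := by rw [he, dot_ones, dvv]
  have dev : dot e v = 1 := by rw [dot_comm]; exact dve
  have dee : dot e e = 0 := by
    rw [he, dot_ones]
    have : dot (fun _ => (1:ZMod 2)) (fun _ : Fin (2*n) => (1:ZMod 2))
        = ((2 * n : ℕ) : ZMod 2) := by
      simp [dot, Finset.card_univ]
    rw [this]
    exact even_cast_zmod2 ⟨n, by ring⟩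
  have hCwt : ∀ x ∈ C, dot x x = 0 := by
    intro x hx
    rw [← wt_cast]
    exact even_cast_zmod2 (hEven x hx)
  have hedual : e ∈ dualCode C := by
    intro x hx
    rw [he, dot_ones]
    exact hCwt x hx
  -- double dual
  have horth : dualCode C = (Bf).orthogonal C := by
    ext y
    constructor
    · intro hy w hw
      exact hy w hw
    · intro hy w hw
      exact hy w hw
  have hdd : ∀ u, (∀ w ∈ dualCode C, dot u w = 0) → u ∈ C := by
    intro u hu
    have h2 : u ∈ (Bf).orthogonal ((Bf).orthogonal C) := by
      intro w hw
      have : dot u w = 0 := hu w (by rw [horth]; exact hw)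
      show Bf w u = 0
      rw [Bf_apply, dot_comm]
      exact this
    rwa [LinearMap.BilinForm.orthogonal_orthogonal Bf_nondeg Bf_refl] at h2
  -- the reduced subspace
  set U1 : Submodule (ZMod 2) (Fin (2*n) → ZMod 2) :=
    dualCode C ⊓ LinearMap.ker (Bf v) ⊓ LinearMap.ker (Bf e) with hU1def
  have memU1 : ∀ w, w ∈ U1 ↔ w ∈ dualCode C ∧ dot v w = 0 ∧ dot e w = 0 := by
    intro w
    simp [hU1def, Submodule.mem_inf, LinearMap.mem_ker, and_assoc]
  have hAlt1 : ∀ u ∈ U1, dot u u = 0 := by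
    intro u hu
    rw [← dot_ones, ← he, dot_comm]
    exact ((memU1 u).1 hu).2.2
  have hCU1 : C ≤ U1 := by
    intro c hc
    rw [memU1]
    refine ⟨hsd hc, ?_, ?_⟩
    · rw [dot_comm]; exact hvdual c hc
    · rw [dot_comm]; exact hedual c hc
  have hU1d : U1 ≤ dualCode C := le_trans inf_le_left inf_le_left
  -- decomposition
  have hdec1 : ∀ z ∈ dualCode C,
      z + (dot e z) • v + ((dot v z) + (dot e z)) • e ∈ U1 := by
    intro z hz
    rw [memU1]
    refine ⟨add_mem (add_mem hz (Submodule.smul_mem _ _ hvdual))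
      (Submodule.smul_mem _ _ hedual), ?_, ?_⟩
    · rw [dot_add_right, dot_add_right, dot_smul_right, dot_smul_right, dvv, dve,
        mul_one, mul_one]
      exact zmod2_add_self _
    · rw [dot_add_right, dot_add_right, dot_smul_right, dot_smul_right, dev, dee,
        mul_one, mul_zero, add_zero]
      exact zmod2_add_self _
  have hsup1 : Submodule.span (ZMod 2) {v, e} ⊔ U1 = dualCode C := by
    apply le_antisymm
    · refine sup_le (Submodule.span_le.2 ?_) hU1d
      rintro z (rfl | rfl)
      exacts [hvdual, hedual]
    · intro z hz
      rw [Submodule.mem_sup]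
      refine ⟨(dot e z) • v + ((dot v z) + (dot e z)) • e,
        Submodule.mem_span_pair.2 ⟨_, _, rfl⟩,
        z + (dot e z) • v + ((dot v z) + (dot e z)) • e, hdec1 z hz, ?_⟩
      funext i
      simp only [Pi.add_apply, Pi.smul_apply, smul_eq_mul]
      exact (by decide : ∀ a b c : ZMod 2, b + c + (a + b + c) = a) _ _ _
  have hinf1 : Submodule.span (ZMod 2) {v, e} ⊓ U1 = ⊥ := by
    rw [eq_bot_iff]
    intro w hw
    rw [Submodule.mem_inf] at hw
    obtain ⟨hw1, hw2⟩ := hw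
    obtain ⟨a, b, rfl⟩ := Submodule.mem_span_pair.1 hw1
    rw [memU1] at hw2
    obtain ⟨-, h1, h2⟩ := hw2
    rw [dot_add_right, dot_smul_right, dot_smul_right, dvv, dve, mul_one, mul_one] at h1
    rw [dot_add_right, dot_smul_right, dot_smul_right, dev, dee, mul_one, mul_zero,
      add_zero] at h2
    have hb : b = 0 := by
      rw [h2, zero_add] at h1; exact h1
    rw [h2, hb]
    simp [Submodule.mem_bot]
  have hli1 : LinearIndependent (ZMod 2) ![v, e] := by
    rw [LinearIndependent.pair_iff]
    intro s t hst
    have h1 : dot v (s • v + t • e) = 0 := by rw [hst]; simp [dot]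
    have h2 : dot e (s • v + t • e) = 0 := by rw [hst]; simp [dot]
    rw [dot_add_right, dot_smul_right, dot_smul_right, dvv, dve, mul_one, mul_one] at h1
    rw [dot_add_right, dot_smul_right, dot_smul_right, dev, dee, mul_one, mul_zero,
      add_zero] at h2
    refine ⟨h2, ?_⟩
    rw [h2, zero_add] at h1; exact h1
  have hrange1 : Set.range ![v, e] = {v, e} := by
    ext z
    simp [Matrix.range_cons, Matrix.range_empty]
    tauto
  have hfr2 : Module.finrank (ZMod 2)
      (Submodule.span (ZMod 2) ({v, e} : Set (Fin (2*n) → ZMod 2))) = 2 := by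
    rw [← hrange1, finrank_span_eq_card hli1]
    simp
  have hrank1 : Module.finrank (ZMod 2) U1 = Module.finrank (ZMod 2) C + 2 * k' := by
    have := Submodule.finrank_sup_add_finrank_inf_eq
      (Submodule.span (ZMod 2) ({v, e} : Set (Fin (2*n) → ZMod 2))) U1
    rw [hsup1, hinf1, hfr2, finrank_bot] at this
    omega
  have hNd1 : ∀ u ∈ U1, (∀ w ∈ U1, dot u w = 0) → u ∈ C := by
    intro u hu h
    rw [memU1] at hu
    obtain ⟨huD, huv, hue⟩ := hu
    refine hdd u fun w hw => ?_
    have hdw := h _ (hdec1 w hw)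
    have huv' : dot u v = 0 := by rw [dot_comm]; exact huv
    have hue' : dot u e = 0 := by rw [dot_comm]; exact hue
    have key : dot u (w + (dot e w) • v + ((dot v w) + (dot e w)) • e) = dot u w := by
      rw [dot_add_right, dot_add_right, dot_smul_right, dot_smul_right, huv', hue']
      ring
    rw [← key]
    exact hdw
  obtain ⟨X', Z', hX'U, hZ'U, hGram', hXX', hZZ', hspan'⟩ :=
    symp_ind C k' U1 hCU1 hU1d hAlt1 hNd1 hrank1
  have hvZ' : ∀ j, dot v (Z' j) = 0 := fun j => ((memU1 _).1 (hZ'U j)).2.1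
  have hvX' : ∀ j, dot v (X' j) = 0 := fun j => ((memU1 _).1 (hX'U j)).2.1
  have heZ' : ∀ j, dot e (Z' j) = 0 := fun j => ((memU1 _).1 (hZ'U j)).2.2
  have heX' : ∀ j, dot e (X' j) = 0 := fun j => ((memU1 _).1 (hX'U j)).2.2
  have hGram : ∀ i j : Fin (k' + 1),
      dot ((Fin.cons v X' : Fin (k' + 1) → Fin (2 * n) → ZMod 2) i)
        ((Fin.cons e Z' : Fin (k' + 1) → Fin (2 * n) → ZMod 2) j)
      = if i = j then (1 : ZMod 2) else 0 := by
    intro i j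
    refine Fin.cases ?_ (fun i' => ?_) i
    · refine Fin.cases ?_ (fun j' => ?_) j
      · simp [dve]
      · simp [Fin.cons_succ, hvZ', (Fin.succ_ne_zero j').symm]
    · refine Fin.cases ?_ (fun j' => ?_) j
      · rw [Fin.cons_succ, Fin.cons_zero, dot_comm, heX',
          if_neg (Fin.succ_ne_zero i')]
      · rw [Fin.cons_succ, Fin.cons_succ, hGram']
        simp [Fin.succ_inj]
  have hXdual : ∀ i, (Fin.cons v X' : Fin (k' + 1) → Fin (2 * n) → ZMod 2) i ∈ dualCode C :=
    fun i => Fin.cases hvdual (fun j => hU1d (hX'U j)) i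
  have hZdual : ∀ i, (Fin.cons e Z' : Fin (k' + 1) → Fin (2 * n) → ZMod 2) i ∈ dualCode C :=
    fun i => Fin.cases hedual (fun j => hU1d (hZ'U j)) i
  refine ⟨(Fin.cons v X' : Fin (k' + 1) → Fin (2 * n) → ZMod 2), (Fin.cons e Z' : Fin (k' + 1) → Fin (2 * n) → ZMod 2), hXdual, hZdual, ?_, ?_, hGram, ?_, ?_, ?_, ?_⟩
  · -- X i ∉ C
    intro i hi
    have h1 : dot ((Fin.cons v X' : Fin (k' + 1) → Fin (2 * n) → ZMod 2) i) ((Fin.cons e Z' : Fin (k' + 1) → Fin (2 * n) → ZMod 2) i) = 1 := by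
      have := hGram i i; rwa [if_pos rfl] at this
    have h2 : dot ((Fin.cons v X' : Fin (k' + 1) → Fin (2 * n) → ZMod 2) i) ((Fin.cons e Z' : Fin (k' + 1) → Fin (2 * n) → ZMod 2) i) = 0 := hZdual i _ hi
    rw [h1] at h2
    exact absurd h2 (by decide)
  · -- Z i ∉ C
    intro i hi
    have h1 : dot ((Fin.cons v X' : Fin (k' + 1) → Fin (2 * n) → ZMod 2) i) ((Fin.cons e Z' : Fin (k' + 1) → Fin (2 * n) → ZMod 2) i) = 1 := by
      have := hGram i i; rwa [if_pos rfl] at this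
    have h2 : dot ((Fin.cons e Z' : Fin (k' + 1) → Fin (2 * n) → ZMod 2) i) ((Fin.cons v X' : Fin (k' + 1) → Fin (2 * n) → ZMod 2) i) = 0 := hXdual i _ hi
    rw [dot_comm, h1] at h2
    exact absurd h2 (by decide)
  · -- XX
    intro i j hij
    rcases Fin.eq_zero_or_eq_succ i with rfl | ⟨i', rfl⟩ <;>
      rcases Fin.eq_zero_or_eq_succ j with rfl | ⟨j', rfl⟩
    · exact absurd rfl hij
    · rw [Fin.cons_zero, Fin.cons_succ]; exact hvX' j'
    · rw [Fin.cons_zero, Fin.cons_succ, dot_comm]; exact hvX' i'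
    · rw [Fin.cons_succ, Fin.cons_succ]; exact hXX' i' j'
  · -- ZZ
    intro i j hij
    rcases Fin.eq_zero_or_eq_succ i with rfl | ⟨i', rfl⟩ <;>
      rcases Fin.eq_zero_or_eq_succ j with rfl | ⟨j', rfl⟩
    · exact absurd rfl hij
    · rw [Fin.cons_zero, Fin.cons_succ]; exact heZ' j'
    · rw [Fin.cons_zero, Fin.cons_succ, dot_comm]; exact heZ' i'
    · rw [Fin.cons_succ, Fin.cons_succ]; exact hZZ' i' j'
  · -- span
    rw [Fin.range_cons, Fin.range_cons]
    have hset : (insert v (Set.range X') ∪ insert e (Set.range Z')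
        : Set (Fin (2*n) → ZMod 2))
        = {v, e} ∪ (Set.range X' ∪ Set.range Z') := by
      ext z
      simp only [Set.mem_union, Set.mem_insert_iff, Set.mem_singleton_iff]
      tauto
    rw [hset, Submodule.span_union, sup_left_comm, hspan', hsup1]
  · -- counting
    have hX0 : (Finset.univ.filter fun i => Odd (wt ((Fin.cons v X' : Fin (k' + 1) → Fin (2 * n) → ZMod 2) i))).card ≤ 1 := by
      have hsub : (Finset.univ.filter fun i => Odd (wt ((Fin.cons v X' : Fin (k' + 1) → Fin (2 * n) → ZMod 2) i)))
          ⊆ {(0 : Fin (k' + 1))} := by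
        intro i hi
        have hoi := (Finset.mem_filter.1 hi).2
        rcases Fin.eq_zero_or_eq_succ i with rfl | ⟨i', rfl⟩
        · exact Finset.mem_singleton.2 rfl
        · exfalso
          rw [Fin.cons_succ, odd_wt_iff] at hoi
          rw [hAlt1 _ (hX'U i')] at hoi
          exact absurd hoi (by decide)
      calc _ ≤ ({(0 : Fin (k'+1))} : Finset _).card := Finset.card_le_card hsub
        _ = 1 := Finset.card_singleton _
    have hZ0 : (Finset.univ.filter fun i => Odd (wt ((Fin.cons e Z' : Fin (k' + 1) → Fin (2 * n) → ZMod 2) i))).card = 0 := by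
      rw [Finset.card_eq_zero, Finset.filter_eq_empty_iff]
      intro i _
      rcases Fin.eq_zero_or_eq_succ i with rfl | ⟨i', rfl⟩
      · rw [Fin.cons_zero, odd_wt_iff, dee]
        exact (by decide : ¬ ((0 : ZMod 2) = 1))
      · rw [Fin.cons_succ, odd_wt_iff, hAlt1 _ (hZ'U i')]
        exact (by decide : ¬ ((0 : ZMod 2) = 1))
    omega
end

section
/- Let S_maj be a Majorana fermion code on 2n Majorana modes with n - k independent generators and distance d, corresponding to a weakly self-dual classical code C ⊆ F_2^{2n} of dimension n - k with minimum weight of C^⊥ \ C equal to d. Then the doubled CSS code with C_X = C_Z = C is a [[2n, 2k, d]] weakly self-dual CSS code: it has 2n physical qubits, encodes 2k logical qubits, and has distance exactly d. -/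
/-- let `C ⊆ F₂^{2n}` be the weakly self-dual classical code of dimension
`n - k` associated with a Majorana fermion code on `2n` Majorana modes with `n - k`
independent generators, whose distance is `d = min{wt x : x ∈ C^⊥ \ C}`.  Then the
doubled CSS code with `C_X = C_Z = C` is a `[[2n, 2k, d]]` weakly self-dual CSS code:
it has `2n` physical qubits, encodes `2n - 2 dim C = 2k` logical qubits, and its distance
(minimum Pauli weight over the centralizer minus the stabilizer) is exactly `d`. -/
theorem stmt_11 {n k d : ℕ} (hk : k ≤ n)
    (C : Submodule (ZMod 2) (Fin (2 * n) → ZMod 2))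
    (hsd : C ≤ dualCode C)
    (hdim : Module.finrank (ZMod 2) C = n - k)
    (hd : d = sInf {m : ℕ | ∃ v, v ∈ dualCode C ∧ v ∉ C ∧ m = wt v}) :
    (2 * n - 2 * Module.finrank (ZMod 2) C = 2 * k) ∧
    sInf {m : ℕ | ∃ x z : Fin (2 * n) → ZMod 2, x ∈ dualCode C ∧ z ∈ dualCode C ∧
        ¬(x ∈ C ∧ z ∈ C) ∧ m = (supp x ∪ supp z).card} = d := by
  refine ⟨by omega, ?_⟩
  subst hd
  set S' : Set ℕ := {m : ℕ | ∃ v, v ∈ dualCode C ∧ v ∉ C ∧ m = wt v} with hS'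
  set S : Set ℕ := {m : ℕ | ∃ x z : Fin (2 * n) → ZMod 2, x ∈ dualCode C ∧ z ∈ dualCode C ∧
        ¬(x ∈ C ∧ z ∈ C) ∧ m = (supp x ∪ supp z).card} with hS
  have hsub : S' ⊆ S := by
    rintro m ⟨v, hv, hvC, rfl⟩
    exact ⟨v, 0, hv, (dualCode C).zero_mem, fun h => hvC h.1, by
      simp [wt, supp]⟩
  have hkey : ∀ m ∈ S, ∃ m' ∈ S', m' ≤ m := by
    rintro m ⟨x, z, hx, hz, hne, rfl⟩
    by_cases hxC : x ∈ C
    · have hzC : z ∉ C := fun h => hne ⟨hxC, h⟩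
      exact ⟨wt z, ⟨z, hz, hzC, rfl⟩,
        Finset.card_le_card (Finset.subset_union_right)⟩
    · exact ⟨wt x, ⟨x, hx, hxC, rfl⟩,
        Finset.card_le_card (Finset.subset_union_left)⟩
  rcases Set.eq_empty_or_nonempty S' with h | h
  · have hSe : S = ∅ := by
      by_contra hne
      obtain ⟨m, hm⟩ := Set.nonempty_iff_ne_empty.mpr hne
      obtain ⟨m', hm', _⟩ := hkey m hm
      rw [h] at hm'
      exact hm'
    rw [hSe, h]
  · have hne : S.Nonempty := h.mono hsub
    have h1 : sInf S ≤ sInf S' := Nat.sInf_le (hsub (Nat.sInf_mem h))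
    have h2 : sInf S' ≤ sInf S := by
      obtain ⟨m', hm', hle⟩ := hkey _ (Nat.sInf_mem hne)
      exact le_trans (Nat.sInf_le hm') hle
    omega
end
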